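/- Let f : X → Y be a compact-preserving function from a sequentially Hausdorff Fréchet space X to a Hausdorff space Y. Then the restriction of f to LI'_f, the set of non-isolated points of the set LI_f of points of local infinity of f, is continuous. -/

import Mathlib

open Filter Topology Set

def CompactPreserving {X Y : Type*} [TopologicalSpace X] [TopologicalSpace Y]
    (f : X → Y) : Prop := ∀ K : Set X, IsCompact K → IsCompact (f '' K)

def LIset {X Y : Type*} [TopologicalSpace X] (f : X → Y) : Set X :=
  {x | ∀ U ∈ 𝓝 x, (f '' U).Infinite}

def LIset' {X Y : Type*} [TopologicalSpace X] (f : X → Y) : Set X :=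
  {x ∈ LIset f | x ∈ closure (LIset f \ {x})}

def SeqHausdorff (X : Type*) [TopologicalSpace X] : Prop :=
  ∀ (u : ℕ → X) (a b : X), Filter.Tendsto u Filter.atTop (𝓝 a) →
    Filter.Tendsto u Filter.atTop (𝓝 b) → a = b

section Helpers

variable {X Y : Type*} [TopologicalSpace X] [TopologicalSpace Y]

/-- extraction of an injective subsequence from a function with infinite range -/
lemma exists_injective_subseq {α : Type*} (g : ℕ → α) (h : (Set.range g).Infinite) :
    ∃ φ : ℕ → ℕ, StrictMono φ ∧ Function.Injective (g ∘ φ) := by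
  classical
  have key : ∀ (s : Finset α), ∃ k, g k ∉ s := by
    intro s
    by_contra hc
    push_neg at hc
    exact h (s.finite_toSet.subset (by rintro _ ⟨k, rfl⟩; exact hc k))
  let F : ℕ → ℕ → ℕ := fun _ prev =>
    Classical.choose (key ((Finset.range (prev + 1)).image g))
  let φ : ℕ → ℕ := fun n => Nat.rec (0 : ℕ) F n
  have hstep : ∀ n, g (φ (n + 1)) ∉ (Finset.range (φ n + 1)).image g := by
    intro n
    exact Classical.choose_spec (key ((Finset.range (φ n + 1)).image g))
  have hgt : ∀ n, φ n < φ (n + 1) := by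
    intro n
    by_contra hle'
    push_neg at hle'
    exact hstep n (Finset.mem_image.2 ⟨φ (n + 1), Finset.mem_range.2 (by omega), rfl⟩)
  have hmono : StrictMono φ := strictMono_nat_of_lt_succ hgt
  refine ⟨φ, hmono, ?_⟩
  have hnew : ∀ m n, m < n → g (φ m) ≠ g (φ n) := by
    intro m n hmn
    obtain ⟨n', rfl⟩ : ∃ n', n = n' + 1 := ⟨n - 1, by omega⟩
    intro heq
    have hφ : φ m ≤ φ n' := by
      rcases Nat.lt_succ_iff_lt_or_eq.1 hmn with h' | h'
      · exact le_of_lt (hmono h')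
      · subst h'; exact le_rfl
    exact hstep n' (Finset.mem_image.2 ⟨φ m, Finset.mem_range.2 (by omega), heq⟩)
  intro m n heq
  by_contra hne
  rcases lt_or_gt_of_ne hne with h' | h'
  · exact hnew m n h' heq
  · exact hnew n m h' heq.symm

/-- extraction of a constant subsequence from a function with finite range -/
lemma exists_const_subseq {α : Type*} (g : ℕ → α) (h : (Set.range g).Finite) :
    ∃ c, ∃ φ : ℕ → ℕ, StrictMono φ ∧ ∀ n, g (φ n) = c := by
  have : ∃ c, {n | g n = c}.Infinite := by
    by_contra hc
    push_neg at hc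
    have hsub : (Set.univ : Set ℕ) ⊆ ⋃ c ∈ Set.range g, {n | g n = c} := by
      intro n _
      exact Set.mem_biUnion ⟨n, rfl⟩ rfl
    exact Set.infinite_univ ((h.biUnion (fun c _ => hc c)).subset hsub)
  obtain ⟨c, hc⟩ := this
  obtain ⟨φ, hφ, hφc⟩ := Filter.extraction_of_frequently_atTop
    (Nat.frequently_atTop_iff_infinite.2 hc)
  exact ⟨c, φ, hφ, hφc⟩

/-- every infinite subset of a compact set has an ω-accumulation point inside the compact -/
lemma exists_acc_pt {K E : Set Y} (hK : IsCompact K) (hE : E.Infinite) (hEK : E ⊆ K) :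
    ∃ z ∈ K, ∀ N ∈ 𝓝 z, (E ∩ N).Infinite := by
  classical
  set g := Set.Infinite.natEmbedding E hE with hg
  have hne : (Filter.map (fun n => (g n : Y)) atTop).NeBot := Filter.map_neBot
  have hle : Filter.map (fun n => (g n : Y)) atTop ≤ 𝓟 K := by
    rw [Filter.le_principal_iff]
    exact Filter.mem_map.2 (Filter.Eventually.of_forall fun n => hEK (g n).2)
  obtain ⟨z, hzK, hz⟩ := hK.exists_clusterPt hle
  refine ⟨z, hzK, ?_⟩
  intro N hN
  have hinj : Function.Injective (fun n => (g n : Y)) := fun a b hab =>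
    g.injective (Subtype.ext hab)
  have hinf : {n | (g n : Y) ∈ N}.Infinite := by
    by_contra hfin
    rw [Set.not_infinite] at hfin
    obtain ⟨M, hM⟩ : ∃ M, ∀ n ∈ {n | (g n : Y) ∈ N}, n < M := by
      rcases hfin.bddAbove with ⟨M, hMb⟩
      exact ⟨M + 1, fun n hn => Nat.lt_succ_of_le (hMb hn)⟩
    have hV : (fun n => (g n : Y)) '' (Set.Ici M) ∈
        Filter.map (fun n => (g n : Y)) atTop := by
      apply Filter.image_mem_map
      exact Filter.mem_atTop M
    have := (clusterPt_iff_nonempty.1 hz) hN hV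
    obtain ⟨w, hwN, n, hn, rfl⟩ := this
    exact absurd (hM n hwN) (not_lt.2 (Set.mem_Ici.1 hn))
  have : Set.InjOn (fun n => (g n : Y)) {n | (g n : Y) ∈ N} :=
    Set.injOn_of_injective hinj
  have himg : ((fun n => (g n : Y)) '' {n | (g n : Y) ∈ N}).Infinite :=
    Set.Infinite.image this hinf
  apply himg.mono
  rintro _ ⟨n, hn, rfl⟩
  exact ⟨(g n).2, hn⟩

end Helpers
section KeyLemmas

variable {X Y : Type*} [TopologicalSpace X] [TopologicalSpace Y]

/-- **Key Lemma (L1).** If `f` is compact preserving into a Hausdorff space and `u → p`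
with `f ∘ u` injective, then `f ∘ u → f p`. -/
lemma tendsto_image_of_injective {f : X → Y} [T2Space Y] (hf : CompactPreserving f)
    {u : ℕ → X} {p : X} (hu : Tendsto u atTop (𝓝 p)) (hinj : Function.Injective (f ∘ u)) :
    Tendsto (fun k => f (u k)) atTop (𝓝 (f p)) := by
  by_contra hc
  rw [Filter.tendsto_iff_forall_eventually_mem] at hc
  push_neg at hc
  obtain ⟨N₀, hN₀, hfr⟩ := hc
  obtain ⟨N, hNsub, hNopen, hNmem⟩ := mem_nhds_iff.1 hN₀
  have hfr' : ∃ᶠ k in atTop, f (u k) ∉ N := by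
    exact hfr.mono (fun k hk hN => hk (hNsub hN))
  obtain ⟨φ, hφ, hφN⟩ := Filter.extraction_of_frequently_atTop hfr'
  set v : ℕ → X := u ∘ φ with hv
  have hvten : Tendsto v atTop (𝓝 p) := hu.comp hφ.tendsto_atTop
  have hvinj : Function.Injective (f ∘ v) := by
    intro a b hab
    exact hφ.injective (hinj hab)
  -- K := insert p (range v) is compact, so f '' K is compact
  have hK : IsCompact (insert p (Set.range v)) := hvten.isCompact_insert_range
  have hfK : IsCompact (f '' insert p (Set.range v)) := hf _ hK
  -- E := range (f ∘ v) is infinite and inside f '' K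
  have hEinf : (Set.range (f ∘ v)).Infinite := Set.infinite_range_of_injective hvinj
  have hEsub : Set.range (f ∘ v) ⊆ f '' insert p (Set.range v) := by
    rintro _ ⟨k, rfl⟩
    exact ⟨v k, Set.mem_insert_of_mem _ ⟨k, rfl⟩, rfl⟩
  obtain ⟨z, hzK, hz⟩ := exists_acc_pt hfK hEinf hEsub
  -- z is not f p : z is in the closed set Nᶜ
  have hzNc : z ∉ N := by
    intro hzN
    have h1 : (Set.range (f ∘ v) ∩ N).Infinite := hz N (hNopen.mem_nhds hzN)
    obtain ⟨w, ⟨⟨k, rfl⟩, hwN⟩⟩ := h1.nonempty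
    exact hφN k hwN
  have hzfp : z ≠ f p := fun h => hzNc (h ▸ hNmem)
  -- hence z = f (v l₀) for some l₀
  have hzmem : z ∈ f '' insert p (Set.range v) := hzK
  obtain ⟨w, hw, rfl⟩ := hzmem
  rcases hw with rfl | ⟨l₀, rfl⟩
  · exact hzfp rfl
  -- now delete the point v l₀ : w := skip l₀
  set w' : ℕ → X := fun l => if l < l₀ then v l else v (l + 1) with hw'
  have hw'mono : StrictMono (fun l => if l < l₀ then l else l + 1) := by
    intro a b hab
    by_cases ha : a < l₀ <;> by_cases hb : b < l₀ <;> simp [ha, hb] <;> omega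
  have hw'ten : Tendsto w' atTop (𝓝 p) := by
    have : w' = v ∘ (fun l => if l < l₀ then l else l + 1) := by
      funext l; by_cases h : l < l₀ <;> simp [hw', h]
    rw [this]
    exact hvten.comp hw'mono.tendsto_atTop
  have hK' : IsCompact (f '' insert p (Set.range w')) := hf _ hw'ten.isCompact_insert_range
  have hK'closed : IsClosed (f '' insert p (Set.range w')) := hK'.isClosed
  -- z = f (v l₀) is an accumulation point of E \ {z} ⊆ f '' K'
  have hzcl : f (v l₀) ∈ closure (Set.range (f ∘ v) \ {f (v l₀)}) := by
    rw [mem_closure_iff_nhds]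
    intro t ht
    have h1 : (Set.range (f ∘ v) ∩ t).Infinite := hz t ht
    have h2 : ((Set.range (f ∘ v) ∩ t) \ {f (v l₀)}).Infinite :=
      h1.diff (Set.finite_singleton _)
    obtain ⟨y, ⟨⟨hyr, hyt⟩, hyz⟩⟩ := h2.nonempty
    exact ⟨y, hyt, hyr, hyz⟩
  have hsub' : Set.range (f ∘ v) \ {f (v l₀)} ⊆ f '' insert p (Set.range w') := by
    rintro _ ⟨⟨k, rfl⟩, hk⟩
    have hkl : k ≠ l₀ := by
      intro h; subst h; simp at hk
    refine ⟨v k, Set.mem_insert_of_mem _ ?_, rfl⟩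
    by_cases h : k < l₀
    · exact ⟨k, by simp [hw', h]⟩
    · refine ⟨k - 1, ?_⟩
      have hk1 : ¬ (k - 1 < l₀) := by omega
      simp only [hw', hk1, if_false]
      congr 1
      omega
  have hzin : f (v l₀) ∈ f '' insert p (Set.range w') :=
    hK'closed.closure_subset ((closure_mono hsub') hzcl)
  obtain ⟨a, ha, haeq⟩ := hzin
  rcases ha with rfl | ⟨l, rfl⟩
  · exact hzfp haeq.symm
  · -- f (w' l) = f (v l₀) contradicts injectivity
    by_cases h : l < l₀
    · have : (f ∘ v) l = (f ∘ v) l₀ := by simpa [hw', h] using haeq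
      exact absurd (hvinj this) (by omega)
    · have : (f ∘ v) (l + 1) = (f ∘ v) l₀ := by simpa [hw', h] using haeq
      exact absurd (hvinj this) (by omega)

end KeyLemmas
section SeqHausLemmas

variable {X Y : Type*} [TopologicalSpace X] [TopologicalSpace Y]

lemma SeqHausdorff.const_eq (hX : SeqHausdorff X) {a b : X}
    (h : Tendsto (fun _ : ℕ => a) atTop (𝓝 b)) : a = b :=
  hX (fun _ => a) a b tendsto_const_nhds h

/-- removing a point different from `p` from a set keeps `p` in the closure. -/
lemma SeqHausdorff.mem_closure_diff_singleton (hX : SeqHausdorff X) {S : Set X} {p x' : X}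
    (hp : p ∈ closure S) (hne : x' ≠ p) : p ∈ closure (S \ {x'}) := by
  -- some neighborhood of p misses x'
  have hU : ∃ U ∈ 𝓝 p, x' ∉ U := by
    by_contra hc
    push_neg at hc
    have : Tendsto (fun _ : ℕ => x') atTop (𝓝 p) := by
      rw [Filter.tendsto_iff_forall_eventually_mem]
      intro s hs
      exact Filter.Eventually.of_forall (fun _ => hc s hs)
    exact hne (hX.const_eq this)
  obtain ⟨U, hU, hxU⟩ := hU
  rw [mem_closure_iff_nhds] at hp ⊢
  intro t ht
  obtain ⟨w, hwt, hwS⟩ := hp (t ∩ U) (Filter.inter_mem ht hU)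
  exact ⟨w, hwt.1, hwS, fun h => hxU (h ▸ hwt.2)⟩

/-- a sequence converging to `x` avoiding `x` has an injective subsequence -/
lemma SeqHausdorff.exists_injective_point_subseq (hX : SeqHausdorff X) {u : ℕ → X} {x : X}
    (hu : Tendsto u atTop (𝓝 x)) (hne : ∀ k, u k ≠ x) :
    ∃ φ : ℕ → ℕ, StrictMono φ ∧ Function.Injective (u ∘ φ) := by
  rcases Set.finite_or_infinite (Set.range u) with hfin | hinf
  · obtain ⟨c, φ, hφ, hφc⟩ := exists_const_subseq u hfin
    exfalso
    have h1 : Tendsto (u ∘ φ) atTop (𝓝 x) := hu.comp hφ.tendsto_atTop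
    have h2 : (u ∘ φ) = fun _ => c := funext hφc
    rw [h2] at h1
    exact hne (φ 0) (by rw [hφc 0]; exact hX.const_eq h1)
  · exact exists_injective_subseq u hinf

/-- from an injective `k : ℕ → ℕ` extract a strictly monotone subsequence -/
lemma exists_strictMono_comp {k : ℕ → ℕ} (hk : Function.Injective k) :
    ∃ φ : ℕ → ℕ, StrictMono φ ∧ StrictMono (k ∘ φ) := by
  have key : ∀ m : ℕ, ∃ n, n > m ∧ k n > k m := by
    intro m
    have hfin : {n | k n ≤ k m}.Finite := by
      have : {n | k n ≤ k m} ⊆ k ⁻¹' (Set.Iic (k m)) := fun n hn => hn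
      exact ((Set.finite_Iic (k m)).preimage (Set.injOn_of_injective hk)).subset this
    have hfin2 : ({n | k n ≤ k m} ∪ Set.Iic m).Finite := hfin.union (Set.finite_Iic m)
    obtain ⟨n, hn⟩ := (Set.infinite_univ.diff hfin2).nonempty
    simp only [Set.mem_diff, Set.mem_union, Set.mem_setOf_eq, Set.mem_Iic, not_or, not_le]
      at hn
    exact ⟨n, hn.2.2, hn.2.1⟩
  let F : ℕ → ℕ → ℕ := fun _ prev => Classical.choose (key prev)
  let φ : ℕ → ℕ := fun n => Nat.rec 0 F n
  have hstep : ∀ n, φ (n + 1) > φ n ∧ k (φ (n + 1)) > k (φ n) := by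
    intro n
    exact Classical.choose_spec (key (φ n))
  refine ⟨φ, strictMono_nat_of_lt_succ (fun n => (hstep n).1), ?_⟩
  exact strictMono_nat_of_lt_succ (fun n => (hstep n).2)

/-- **Sub-lemma.** If `v → x` is injective, and every value of `v` lies in the range of a
sequence `u → z`, then `z = x`. -/
lemma SeqHausdorff.limit_eq_of_range_subset (hX : SeqHausdorff X) {u v : ℕ → X} {z x : X}
    (hu : Tendsto u atTop (𝓝 z)) (hv : Tendsto v atTop (𝓝 x))
    (hvinj : Function.Injective v) (hrange : ∀ n, ∃ k, v n = u k) : z = x := by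
  choose k hk using hrange
  have hkinj : Function.Injective k := by
    intro a b hab
    exact hvinj (by rw [hk a, hk b, hab])
  obtain ⟨φ, hφ, hkφ⟩ := exists_strictMono_comp hkinj
  have h1 : Tendsto (v ∘ φ) atTop (𝓝 x) := hv.comp hφ.tendsto_atTop
  have h2 : Tendsto (v ∘ φ) atTop (𝓝 z) := by
    have : v ∘ φ = u ∘ (k ∘ φ) := by
      funext n; exact hk (φ n)
    rw [this]
    exact hu.comp hkφ.tendsto_atTop
  exact (hX _ _ _ h2 h1)

end SeqHausLemmas

section Greedy

/-- greedy construction of an injective choice sequence -/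
lemma exists_greedy_injective {α : Type*} (P : ℕ → α → Prop)
    (h : ∀ t (F : Finset α), ∃ c, P t c ∧ c ∉ F) :
    ∃ σ : ℕ → α, Function.Injective σ ∧ ∀ t, P t (σ t) := by
  classical
  -- build list of previous choices
  let step : List α → α := fun L => Classical.choose (h L.length L.toFinset)
  let L : ℕ → List α := fun n => Nat.rec [] (fun _ prev => prev ++ [step prev]) n
  have hlen : ∀ n, (L n).length = n := by
    intro n
    induction n with
    | zero => rfl
    | succ n ih => simp [L, List.length_append, ih]
  set σ : ℕ → α := fun n => step (L n) with hσ
  have hLsucc : ∀ n, L (n + 1) = L n ++ [σ n] := fun n => rfl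
  have hspec : ∀ n, P n (σ n) ∧ σ n ∉ (L n).toFinset := by
    intro n
    have h2 := Classical.choose_spec (h (L n).length (L n).toFinset)
    have h3 : P (L n).length (σ n) := h2.1
    have h4 : σ n ∉ (L n).toFinset := h2.2
    rw [hlen n] at h3
    exact ⟨h3, h4⟩
  have hmem : ∀ s n, s < n → σ s ∈ (L n).toFinset := by
    intro s n hsn
    induction n with
    | zero => omega
    | succ n ih =>
      rw [hLsucc n]
      simp only [List.toFinset_append, Finset.mem_union]
      rcases Nat.lt_succ_iff_lt_or_eq.1 hsn with h' | h'
      · exact Or.inl (ih h')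
      · subst h'
        simp
  refine ⟨σ, ?_, fun t => (hspec t).1⟩
  intro a b hab
  by_contra hne
  rcases lt_or_gt_of_ne hne with h' | h'
  · exact (hspec b).2 (hab ▸ hmem a b h')
  · exact (hspec a).2 (hab.symm ▸ hmem b a h')

end Greedy
section Machine

variable {X Y : Type*} [TopologicalSpace X] [TopologicalSpace Y]

/-- **The machine.** Given a countable family of sequences `u i` converging to points
`z i ≠ p`, whose values avoid a neighborhood `H` of `f p`, where each sequence either has
injective values or constant value `c i` (with the constants pairwise distinct), and such
that every neighborhood of `p` absorbs a tail of one of the sequences, we get a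
contradiction. -/
lemma machine [FrechetUrysohnSpace X] [T2Space Y] (hX : SeqHausdorff X) {f : X → Y}
    (hf : CompactPreserving f) (p : X) (H : Set Y) (hHo : IsOpen H) (hfp : f p ∈ H)
    (z : ℕ → X) (u : ℕ → ℕ → X) (T : ℕ → Prop) (c : ℕ → Y)
    (hz : ∀ i, z i ≠ p)
    (hu : ∀ i, Tendsto (u i) atTop (𝓝 (z i)))
    (hval : ∀ i k, f (u i k) ∉ H)
    (hinj : ∀ i, T i → Function.Injective (fun k => f (u i k)))
    (hconst : ∀ i, ¬ T i → ∀ k, f (u i k) = c i)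
    (hcinj : ∀ i j, ¬ T i → ¬ T j → c i = c j → i = j)
    (reach : ∀ U ∈ 𝓝 p, ∃ i, ∀ᶠ k in atTop, u i k ∈ U) : False := by
  classical
  set π : ℕ → Y := fun j => f (u (Nat.unpair j).1 (Nat.unpair j).2) with hπ
  set A : Set X := {w | ∃ i k, w = u i k ∧ (T i → ∀ j ≤ i, f (u i k) ≠ π j)} with hA
  -- p is in the closure of A
  have hpA : p ∈ closure A := by
    rw [mem_closure_iff_nhds]
    intro t ht
    obtain ⟨i, hi⟩ := reach t ht
    by_cases hT : T i
    · -- finitely many k are excluded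
      have hBfin : {k | ∃ j ≤ i, f (u i k) = π j}.Finite := by
        have hsub : {k | ∃ j ≤ i, f (u i k) = π j} ⊆
            ⋃ j ∈ Set.Iic i, {k | f (u i k) = π j} := by
          rintro k ⟨j, hj, hk⟩
          exact Set.mem_biUnion hj hk
        refine ((Set.finite_Iic i).biUnion (fun j _ => ?_)).subset hsub
        apply Set.Subsingleton.finite
        intro a ha b hb
        exact hinj i hT (ha.trans hb.symm)
      have hev : ∀ᶠ k in atTop, k ∉ {k | ∃ j ≤ i, f (u i k) = π j} := by
        rcases hBfin.bddAbove with ⟨M, hM⟩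
        rw [Filter.eventually_atTop]
        exact ⟨M + 1, fun k hk hkB => by have := hM hkB; omega⟩
      obtain ⟨k, hk1, hk2⟩ := (hi.and hev).exists
      refine ⟨u i k, hk1, i, k, rfl, fun _ => ?_⟩
      intro j hj hj2
      exact hk2 ⟨j, hj, hj2⟩
    · obtain ⟨k, hk⟩ := hi.exists
      exact ⟨u i k, hk, i, k, rfl, fun h => absurd h hT⟩
  -- Fréchet: a sequence in A converging to p
  obtain ⟨v, hvA, hvten⟩ := mem_closure_iff_seq_limit.1 hpA
  have hvval : ∀ n, f (v n) ∉ H := by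
    intro n
    obtain ⟨i, k, heq, -⟩ := hvA n
    rw [heq]
    exact hval i k
  have hvne : ∀ n, v n ≠ p := fun n h => hvval n (h ▸ hfp)
  -- injective point subsequence
  obtain ⟨φ₁, hφ₁, hφ₁inj⟩ := hX.exists_injective_point_subseq hvten hvne
  set v₁ : ℕ → X := v ∘ φ₁ with hv₁
  have hv₁ten : Tendsto v₁ atTop (𝓝 p) := hvten.comp hφ₁.tendsto_atTop
  have hv₁A : ∀ n, v₁ n ∈ A := fun n => hvA (φ₁ n)
  -- dichotomy on the values of v₁
  rcases Set.finite_or_infinite (Set.range (fun n => f (v₁ n))) with hfin | hinf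
  swap
  · -- infinite value range: L1 gives a contradiction
    obtain ⟨φ₂, hφ₂, hφ₂inj⟩ := exists_injective_subseq _ hinf
    have h1 : Tendsto (v₁ ∘ φ₂) atTop (𝓝 p) := hv₁ten.comp hφ₂.tendsto_atTop
    have h2 : Tendsto (fun n => f ((v₁ ∘ φ₂) n)) atTop (𝓝 (f p)) :=
      tendsto_image_of_injective hf h1 hφ₂inj
    have h3 : ∀ᶠ n in atTop, f ((v₁ ∘ φ₂) n) ∈ H :=
      h2.eventually_mem (hHo.mem_nhds hfp)
    obtain ⟨n, hn⟩ := h3.exists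
    exact hvval (φ₁ (φ₂ n)) hn
  -- finite value range: constant value subsequence
  obtain ⟨c₀, φ₂, hφ₂, hφ₂c⟩ := exists_const_subseq _ hfin
  set v₂ : ℕ → X := v₁ ∘ φ₂ with hv₂
  have hv₂ten : Tendsto v₂ atTop (𝓝 p) := hv₁ten.comp hφ₂.tendsto_atTop
  have hv₂inj : Function.Injective v₂ := hφ₁inj.comp hφ₂.injective
  have hv₂A : ∀ n, v₂ n ∈ A := fun n => hv₁A (φ₂ n)
  have hv₂c : ∀ n, f (v₂ n) = c₀ := hφ₂c
  -- choose witnesses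
  have hwit : ∀ n, ∃ i k, v₂ n = u i k ∧ (T i → ∀ j ≤ i, f (u i k) ≠ π j) :=
    fun n => hv₂A n
  choose I K hIK hcond using hwit
  -- c₀ is a value π j₀
  have hj₀ : ∃ j₀, π j₀ = c₀ := by
    refine ⟨Nat.pair (I 0) (K 0), ?_⟩
    simp only [hπ, Nat.unpair_pair]
    rw [← hIK 0]
    exact hv₂c 0
  obtain ⟨j₀, hj₀⟩ := hj₀
  -- the set of n with T (I n) is finite
  have hTfin : {n | T (I n)}.Finite := by
    have hIlt : ∀ n, T (I n) → I n < j₀ := by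
      intro n hT
      by_contra hge
      push_neg at hge
      have := hcond n hT j₀ hge
      rw [hj₀] at this
      rw [← hIK n] at this
      exact this (hv₂c n)
    have hIinj : Set.InjOn I {n | T (I n)} := by
      intro a ha b hb hab
      apply hv₂inj
      rw [hIK a, hIK b, hab]
      have h1 : f (u (I b) (K a)) = f (u (I b) (K b)) := by
        have e1 : f (u (I b) (K a)) = c₀ := by rw [← hab, ← hIK a]; exact hv₂c a
        have e2 : f (u (I b) (K b)) = c₀ := by rw [← hIK b]; exact hv₂c b
        rw [e1, e2]
      have := hinj (I b) (hab ▸ ha) h1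
      rw [this]
    have : I '' {n | T (I n)} ⊆ Set.Iio j₀ := by
      rintro _ ⟨n, hn, rfl⟩
      exact hIlt n hn
    exact ((Set.finite_Iio j₀).subset this).of_finite_image hIinj
  -- so infinitely many n have ¬ T (I n), and they all share the same index i*
  have hN₂ : {n | ¬ T (I n)}.Infinite := by
    have := hTfin.infinite_compl
    exact this
  obtain ⟨n₀, hn₀⟩ := hN₂.nonempty
  have hIeq : ∀ n, ¬ T (I n) → I n = I n₀ := by
    intro n hn
    apply hcinj _ _ hn hn₀
    have e1 : c (I n) = c₀ := by
      rw [← hconst (I n) hn (K n), ← hIK n]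
      exact hv₂c n
    have e2 : c (I n₀) = c₀ := by
      rw [← hconst (I n₀) hn₀ (K n₀), ← hIK n₀]
      exact hv₂c n₀
    rw [e1, e2]
  -- extract the subsequence in N₂
  obtain ⟨φ₃, hφ₃, hφ₃N⟩ := Filter.extraction_of_frequently_atTop
    (Nat.frequently_atTop_iff_infinite.2 hN₂)
  set v₃ : ℕ → X := v₂ ∘ φ₃ with hv₃
  have hv₃ten : Tendsto v₃ atTop (𝓝 p) := hv₂ten.comp hφ₃.tendsto_atTop
  have hv₃inj : Function.Injective v₃ := hv₂inj.comp hφ₃.injective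
  have hv₃range : ∀ n, ∃ k, v₃ n = u (I n₀) k := by
    intro n
    refine ⟨K (φ₃ n), ?_⟩
    rw [← hIeq (φ₃ n) (hφ₃N n)]
    exact hIK (φ₃ n)
  exact hz (I n₀) (hX.limit_eq_of_range_subset (hu (I n₀)) hv₃ten hv₃inj hv₃range)

end Machine
section Supply

variable {X Y : Type*} [TopologicalSpace X] [TopologicalSpace Y]

/-- `p` admits a convergent sequence with injective images -/
def Reg1 (f : X → Y) (p : X) : Prop :=
  ∃ u : ℕ → X, Tendsto u atTop (𝓝 p) ∧ Function.Injective (fun k => f (u k))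

/-- harvest an injective-valued sequence with values in a given neighborhood of `f p` -/
lemma reg1_harvest [T2Space Y] {f : X → Y} (hf : CompactPreserving f) {p : X}
    (hp : Reg1 f p) {G : Set Y} (hGo : IsOpen G) (hG : f p ∈ G) :
    ∃ u : ℕ → X, Tendsto u atTop (𝓝 p) ∧ Function.Injective (fun k => f (u k)) ∧
      ∀ k, f (u k) ∈ G := by
  obtain ⟨u, hu, huinj⟩ := hp
  have h1 : Tendsto (fun k => f (u k)) atTop (𝓝 (f p)) :=
    tendsto_image_of_injective hf hu huinj
  have h2 : ∀ᶠ k in atTop, f (u k) ∈ G := h1.eventually_mem (hGo.mem_nhds hG)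
  rw [Filter.eventually_atTop] at h2
  obtain ⟨M, hM⟩ := h2
  refine ⟨fun k => u (k + M), ?_, ?_, fun k => hM _ (by omega)⟩
  · exact hu.comp (tendsto_add_atTop_nat M)
  · intro a b hab
    have := huinj hab
    omega

/-- harvest a constant-valued sequence avoiding a finite set of values,
at a point of local infinity admitting no injective-valued sequence -/
lemma pers_harvest [FrechetUrysohnSpace X] {f : X → Y} {q : X}
    (hq : q ∈ LIset f) (hnr : ¬ Reg1 f q) (F : Finset Y) :
    ∃ c, c ∉ F ∧ ∃ u : ℕ → X, Tendsto u atTop (𝓝 q) ∧ ∀ k, f (u k) = c := by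
  have hqcl : q ∈ closure {z | f z ∉ F} := by
    rw [mem_closure_iff_nhds]
    intro t ht
    have hinf : (f '' t).Infinite := hq t ht
    obtain ⟨val, hval⟩ := (hinf.diff (F.finite_toSet)).nonempty
    obtain ⟨z, hz, rfl⟩ := hval.1
    exact ⟨z, hz, hval.2⟩
  obtain ⟨u, huF, hu⟩ := mem_closure_iff_seq_limit.1 hqcl
  rcases Set.finite_or_infinite (Set.range (fun k => f (u k))) with hfin | hinf
  · obtain ⟨c, φ, hφ, hφc⟩ := exists_const_subseq _ hfin
    refine ⟨c, ?_, u ∘ φ, hu.comp hφ.tendsto_atTop, hφc⟩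
    rw [← hφc 0]
    exact huF (φ 0)
  · exfalso
    obtain ⟨φ, hφ, hφinj⟩ := exists_injective_subseq _ hinf
    exact hnr ⟨u ∘ φ, hu.comp hφ.tendsto_atTop, hφinj⟩

/-- harvest a sequence of satellites in `LIset f` converging to `p`, avoiding `p` and `x'` -/
lemma satellites_harvest [FrechetUrysohnSpace X] (hX : SeqHausdorff X) {f : X → Y} {p x' : X}
    (hp : p ∈ closure (LIset f \ {p})) (hx' : x' ≠ p) :
    ∃ q : ℕ → X, Tendsto q atTop (𝓝 p) ∧ ∀ m, q m ∈ LIset f ∧ q m ≠ p ∧ q m ≠ x' := by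
  have h1 : p ∈ closure ((LIset f \ {p}) \ {x'}) :=
    hX.mem_closure_diff_singleton hp hx'
  obtain ⟨q, hqm, hq⟩ := mem_closure_iff_seq_limit.1 h1
  refine ⟨q, hq, fun m => ?_⟩
  obtain ⟨⟨h2, h3⟩, h4⟩ := hqm m
  exact ⟨h2, by simpa using h3, by simpa using h4⟩

/-- monotone enumeration of an infinite set of naturals -/
lemma infinite_enum {S : Set ℕ} (h : S.Infinite) :
    ∃ φ : ℕ → ℕ, StrictMono φ ∧ ∀ n, φ n ∈ S :=
  ⟨Nat.nth S, Nat.nth_strictMono h, fun n => Nat.nth_mem_of_infinite h n⟩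

/-- **Per spine point trichotomy.** -/
lemma per_spine_point [FrechetUrysohnSpace X] [T2Space Y] (hX : SeqHausdorff X)
    {f : X → Y} (hf : CompactPreserving f) {x p : X} {y : Y} {W : Set Y}
    (hWo : IsOpen W) (hyW : y ∈ W) (hpy : f p = y) (hpx : p ≠ x)
    (hpcl : p ∈ closure (LIset f \ {p})) :
    (∃ u : ℕ → X, Tendsto u atTop (𝓝 p) ∧ Function.Injective (fun k => f (u k)) ∧
        ∀ k, f (u k) ∈ W)
    ∨ (∃ q : ℕ → X, ∃ col : ℕ → ℕ → X, Tendsto q atTop (𝓝 p) ∧ (∀ m, q m ≠ x) ∧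
        (∀ m, Tendsto (col m) atTop (𝓝 (q m)) ∧
          Function.Injective (fun k => f (col m k)) ∧ ∀ k, f (col m k) ∈ W))
    ∨ (∃ q : ℕ → X, Tendsto q atTop (𝓝 p) ∧ (∀ m, q m ≠ x) ∧
        (∀ m (F : Finset Y), ∃ c, c ∈ W ∧ c ∉ F ∧
          ∃ u : ℕ → X, Tendsto u atTop (𝓝 (q m)) ∧ ∀ k, f (u k) = c)) := by
  classical
  by_cases hreg : Reg1 f p
  · left
    obtain ⟨u, h1, h2, h3⟩ := reg1_harvest hf hreg hWo (hpy ▸ hyW)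
    exact ⟨u, h1, h2, h3⟩
  -- satellites
  obtain ⟨q₀, hq₀, hq₀m⟩ := satellites_harvest hX hpcl (Ne.symm hpx)
  -- satellite values have finite range, extract constant value e
  rcases Set.finite_or_infinite (Set.range (fun m => f (q₀ m))) with hfin | hinf
  swap
  · exfalso
    obtain ⟨φ, hφ, hφinj⟩ := exists_injective_subseq _ hinf
    exact hreg ⟨q₀ ∘ φ, hq₀.comp hφ.tendsto_atTop, hφinj⟩
  obtain ⟨e, φe, hφe, hφec⟩ := exists_const_subseq _ hfin
  set q₁ : ℕ → X := q₀ ∘ φe with hq₁def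
  have hq₁ : Tendsto q₁ atTop (𝓝 p) := hq₀.comp hφe.tendsto_atTop
  have hq₁m : ∀ m, q₁ m ∈ LIset f ∧ q₁ m ≠ p ∧ q₁ m ≠ x := fun m => hq₀m (φe m)
  have hq₁v : ∀ m, f (q₁ m) = e := hφec
  -- classify the satellites
  set B1 : ℕ → Prop := fun m => ∀ F : Finset Y, ∃ c, c ∈ W ∧ c ∉ F ∧
    ∃ u : ℕ → X, Tendsto u atTop (𝓝 (q₁ m)) ∧ ∀ k, f (u k) = c with hB1
  have htri : {m | Reg1 f (q₁ m)}.Infinite ∨ {m | ¬ Reg1 f (q₁ m) ∧ B1 m}.Infinite ∨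
      {m | ¬ Reg1 f (q₁ m) ∧ ¬ B1 m}.Infinite := by
    by_contra hcon
    push_neg at hcon
    obtain ⟨ha, hb, hc⟩ := hcon
    have : (Set.univ : Set ℕ).Finite := by
      refine ((ha.union hb).union hc).subset ?_
      intro m _
      by_cases h1 : Reg1 f (q₁ m)
      · exact Or.inl (Or.inl h1)
      · by_cases h2 : B1 m
        · exact Or.inl (Or.inr ⟨h1, h2⟩)
        · exact Or.inr ⟨h1, h2⟩
    exact Set.infinite_univ this
  rcases htri with hMa | hMb1 | hMb2
  · -- satellites admitting injective-valued sequences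
    obtain ⟨φ, hφ, hφmem⟩ := infinite_enum hMa
    set q₂ : ℕ → X := q₁ ∘ φ with hq₂def
    have hq₂ : Tendsto q₂ atTop (𝓝 p) := hq₁.comp hφ.tendsto_atTop
    by_cases heW : e ∈ W
    · -- case (ii)
      right; left
      have hcol : ∀ m, ∃ col : ℕ → X, Tendsto col atTop (𝓝 (q₂ m)) ∧
          Function.Injective (fun k => f (col k)) ∧ ∀ k, f (col k) ∈ W := by
        intro m
        have := reg1_harvest hf (hφmem m) hWo (by rw [hq₁v (φ m)]; exact heW)
        exact this
      choose col h1 h2 h3 using hcol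
      exact ⟨q₂, col, hq₂, fun m => (hq₁m (φ m)).2.2, fun m => ⟨h1 m, h2 m, h3 m⟩⟩
    · -- e ∉ W : contradiction via the machine at p
      exfalso
      have heny : e ≠ y := fun h => heW (h ▸ hyW)
      obtain ⟨G, H, hGo, hHo, heG, hyH, hdisj⟩ := t2_separation heny
      have hcol : ∀ m, ∃ col : ℕ → X, Tendsto col atTop (𝓝 (q₂ m)) ∧
          Function.Injective (fun k => f (col k)) ∧ ∀ k, f (col k) ∈ G := by
        intro m
        exact reg1_harvest hf (hφmem m) hGo (by rw [hq₁v (φ m)]; exact heG)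
      choose col h1 h2 h3 using hcol
      refine machine hX hf p H hHo (hpy ▸ hyH) q₂ col (fun _ => True) (fun _ => y)
        (fun m => (hq₁m (φ m)).2.1) h1 ?_ (fun m _ => h2 m)
        (fun m hm => absurd trivial hm) (fun i j hi _ _ => absurd trivial hi) ?_
      · intro m k hk
        exact (Set.disjoint_left.1 hdisj) (h3 m k) hk
      · intro U hU
        obtain ⟨U', hU'sub, hU'o, hpU'⟩ := mem_nhds_iff.1 hU
        have : ∀ᶠ m in atTop, q₂ m ∈ U' := hq₂.eventually_mem (hU'o.mem_nhds hpU')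
        obtain ⟨m, hm⟩ := this.exists
        refine ⟨m, ?_⟩
        have := (h1 m).eventually_mem (hU'o.mem_nhds hm)
        exact this.mono (fun k hk => hU'sub hk)
  · -- case (iii)
    right; right
    obtain ⟨φ, hφ, hφmem⟩ := infinite_enum hMb1
    exact ⟨q₁ ∘ φ, hq₁.comp hφ.tendsto_atTop, fun m => (hq₁m (φ m)).2.2,
      fun m => (hφmem m).2⟩
  · -- satellites with only non-W constant values : contradiction via the machine at p
    exfalso
    obtain ⟨φ, hφ, hφmem⟩ := infinite_enum hMb2
    set q₂ : ℕ → X := q₁ ∘ φ with hq₂def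
    have hq₂ : Tendsto q₂ atTop (𝓝 p) := hq₁.comp hφ.tendsto_atTop
    -- supply of constant values outside W
    have hsupply : ∀ m (F : Finset Y), ∃ c, (c ∉ W ∧
        ∃ u : ℕ → X, Tendsto u atTop (𝓝 (q₂ m)) ∧ ∀ k, f (u k) = c) ∧ c ∉ F := by
      intro m F
      obtain ⟨hnr, hnb1⟩ := hφmem m
      have hnb1' : ¬ ∀ F : Finset Y, ∃ c, c ∈ W ∧ c ∉ F ∧
          ∃ u : ℕ → X, Tendsto u atTop (𝓝 (q₁ (φ m))) ∧ ∀ k, f (u k) = c := hnb1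
      obtain ⟨F₁, hF₁⟩ := not_forall.1 hnb1'
      obtain ⟨c, hc1, hc2⟩ := pers_harvest (hq₁m (φ m)).1 hnr (F ∪ F₁)
      simp only [Finset.mem_union, not_or] at hc1
      refine ⟨c, ⟨?_, hc2⟩, hc1.1⟩
      intro hcW
      exact hF₁ ⟨c, hcW, hc1.2, hc2⟩
  -- greedy choice of pairwise distinct constants
    obtain ⟨σ, hσinj, hσ⟩ := exists_greedy_injective
      (fun m c => c ∉ W ∧ ∃ u : ℕ → X, Tendsto u atTop (𝓝 (q₂ m)) ∧ ∀ k, f (u k) = c)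
      hsupply
    have hrow : ∀ m, ∃ u : ℕ → X, Tendsto u atTop (𝓝 (q₂ m)) ∧ ∀ k, f (u k) = σ m :=
      fun m => (hσ m).2
    choose row h1 h2 using hrow
    refine machine hX hf p W hWo (hpy ▸ hyW) q₂ row (fun _ => False) σ
      (fun m => (hq₁m (φ m)).2.1) h1 ?_ (fun m hm => absurd hm (by simp))
      (fun m _ k => h2 m k) (fun i j _ _ hij => hσinj hij) ?_
    · intro m k
      rw [h2 m k]
      exact (hσ m).1
    · intro U hU
      obtain ⟨U', hU'sub, hU'o, hpU'⟩ := mem_nhds_iff.1 hU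
      have : ∀ᶠ m in atTop, q₂ m ∈ U' := hq₂.eventually_mem (hU'o.mem_nhds hpU')
      obtain ⟨m, hm⟩ := this.exists
      refine ⟨m, ?_⟩
      have := (h1 m).eventually_mem (hU'o.mem_nhds hm)
      exact this.mono (fun k hk => hU'sub hk)

end Supply
theorem stmt9 {X Y : Type*} [TopologicalSpace X] [TopologicalSpace Y]
    [FrechetUrysohnSpace X] [T2Space Y] (hX : SeqHausdorff X)
    (f : X → Y) (hf : CompactPreserving f) :
    Continuous (Set.restrict (LIset' f) f) := by
  classical
  apply SeqContinuous.continuous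
  intro s a hs
  by_contra hc
  set x : X := (a : X) with hxdef
  have hsx : Tendsto (fun n => (s n : X)) atTop (𝓝 x) := tendsto_subtype_rng.1 hs
  have hxmem : x ∈ LIset' f := a.2
  have hgoal : ¬ Tendsto (fun n => f ((s n : X))) atTop (𝓝 (f x)) := hc
  rw [Filter.tendsto_iff_forall_eventually_mem] at hgoal
  push_neg at hgoal
  obtain ⟨N₀, hN₀, hfr0⟩ := hgoal
  obtain ⟨N, hNsub, hNo, hNx⟩ := mem_nhds_iff.1 hN₀
  have hfr : ∃ᶠ n in atTop, f ((s n : X)) ∉ N := by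
    exact hfr0.mono (fun n hn h => hn (hNsub h))
  obtain ⟨φ₀, hφ₀, hφ₀N⟩ := Filter.extraction_of_frequently_atTop hfr
  -- dichotomy on the values along φ₀
  rcases Set.finite_or_infinite
    (Set.range (fun k => f ((s (φ₀ k) : X)))) with hfin | hinf
  swap
  · -- infinite range: L1 contradiction
    obtain ⟨φ₁, hφ₁, hφ₁inj⟩ := exists_injective_subseq _ hinf
    have h1 : Tendsto (fun k => ((s (φ₀ (φ₁ k)) : X))) atTop (𝓝 x) :=
      hsx.comp ((hφ₀.comp hφ₁).tendsto_atTop)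
    have h2 : Tendsto (fun k => f ((s (φ₀ (φ₁ k)) : X))) atTop (𝓝 (f x)) :=
      tendsto_image_of_injective hf h1 hφ₁inj
    obtain ⟨k, hk⟩ := (h2.eventually_mem (hNo.mem_nhds hNx)).exists
    exact hφ₀N (φ₁ k) hk
  -- finite range: constant value y
  obtain ⟨y, φ₁, hφ₁, hφ₁c⟩ := exists_const_subseq _ hfin
  set ψ : ℕ → ℕ := φ₀ ∘ φ₁ with hψdef
  have hψ : StrictMono ψ := hφ₀.comp hφ₁
  set spine : ℕ → X := fun k => ((s (ψ k) : X)) with hspinedef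
  have hspten : Tendsto spine atTop (𝓝 x) := hsx.comp hψ.tendsto_atTop
  have hspy : ∀ k, f (spine k) = y := hφ₁c
  have hspmem : ∀ k, spine k ∈ LIset' f := fun k => (s (ψ k)).2
  have hyN : y ∉ N := by
    rw [← hspy 0]
    exact hφ₀N (φ₁ 0)
  have hyfx : f x ≠ y := fun h => hyN (h ▸ hNx)
  have hspx : ∀ k, spine k ≠ x := by
    intro k h
    exact hyfx (by rw [← hspy k, h])
  -- separate f x and y
  obtain ⟨V₁, W, hV₁o, hWo, hfxV₁, hyW, hdisj⟩ := t2_separation hyfx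
  -- per spine point trichotomy
  have hout : ∀ n,
      (∃ u : ℕ → X, Tendsto u atTop (𝓝 (spine n)) ∧
          Function.Injective (fun k => f (u k)) ∧ ∀ k, f (u k) ∈ W)
      ∨ (∃ q : ℕ → X, ∃ col : ℕ → ℕ → X, Tendsto q atTop (𝓝 (spine n)) ∧
          (∀ m, q m ≠ x) ∧ (∀ m, Tendsto (col m) atTop (𝓝 (q m)) ∧
            Function.Injective (fun k => f (col m k)) ∧ ∀ k, f (col m k) ∈ W))
      ∨ (∃ q : ℕ → X, Tendsto q atTop (𝓝 (spine n)) ∧ (∀ m, q m ≠ x) ∧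
          (∀ m (F : Finset Y), ∃ c, c ∈ W ∧ c ∉ F ∧
            ∃ u : ℕ → X, Tendsto u atTop (𝓝 (q m)) ∧ ∀ k, f (u k) = c)) := by
    intro n
    exact per_spine_point hX hf hWo hyW (hspy n) (hspx n) (hspmem n).2
  -- three-way pigeonhole over n
  set SA := {n | ∃ u : ℕ → X, Tendsto u atTop (𝓝 (spine n)) ∧
      Function.Injective (fun k => f (u k)) ∧ ∀ k, f (u k) ∈ W} with hSA
  set SB := {n | ∃ q : ℕ → X, ∃ col : ℕ → ℕ → X, Tendsto q atTop (𝓝 (spine n)) ∧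
      (∀ m, q m ≠ x) ∧ (∀ m, Tendsto (col m) atTop (𝓝 (q m)) ∧
        Function.Injective (fun k => f (col m k)) ∧ ∀ k, f (col m k) ∈ W)} with hSB
  set SC := {n | ∃ q : ℕ → X, Tendsto q atTop (𝓝 (spine n)) ∧ (∀ m, q m ≠ x) ∧
      (∀ m (F : Finset Y), ∃ c, c ∈ W ∧ c ∉ F ∧
        ∃ u : ℕ → X, Tendsto u atTop (𝓝 (q m)) ∧ ∀ k, f (u k) = c)} with hSC
  have htri : SA.Infinite ∨ SB.Infinite ∨ SC.Infinite := by
    by_contra hcon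
    push_neg at hcon
    obtain ⟨ha, hb, hcfin⟩ := hcon
    refine Set.infinite_univ (((ha.union hb).union hcfin).subset ?_)
    intro n _
    rcases hout n with h | h | h
    · exact Or.inl (Or.inl h)
    · exact Or.inl (Or.inr h)
    · exact Or.inr h
  have hValNotV₁ : ∀ c ∈ W, c ∉ V₁ := fun c hc hv => (Set.disjoint_left.1 hdisj) hv hc
  rcases htri with hSAi | hSBi | hSCi
  · -- CASE A
    obtain ⟨φ, hφ, hφmem⟩ := infinite_enum hSAi
    have hch : ∀ i, ∃ u : ℕ → X, Tendsto u atTop (𝓝 (spine (φ i))) ∧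
        Function.Injective (fun k => f (u k)) ∧ ∀ k, f (u k) ∈ W := fun i => hφmem i
    choose u h1 h2 h3 using hch
    refine machine hX hf x V₁ hV₁o hfxV₁ (fun i => spine (φ i)) u (fun _ => True)
      (fun _ => y) (fun i => hspx (φ i)) h1
      (fun i k => hValNotV₁ _ (h3 i k)) (fun i _ => h2 i)
      (fun i hi => absurd trivial hi) (fun i j hi _ _ => absurd trivial hi) ?_
    intro U hU
    obtain ⟨U', hU'sub, hU'o, hxU'⟩ := mem_nhds_iff.1 hU
    have hev : ∀ᶠ i in atTop, spine (φ i) ∈ U' :=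
      (hspten.comp hφ.tendsto_atTop).eventually_mem (hU'o.mem_nhds hxU')
    obtain ⟨i, hi⟩ := hev.exists
    exact ⟨i, ((h1 i).eventually_mem (hU'o.mem_nhds hi)).mono (fun k hk => hU'sub hk)⟩
  · -- CASE B
    obtain ⟨φ, hφ, hφmem⟩ := infinite_enum hSBi
    have hch : ∀ i, ∃ q : ℕ → X, ∃ col : ℕ → ℕ → X,
        Tendsto q atTop (𝓝 (spine (φ i))) ∧ (∀ m, q m ≠ x) ∧
        (∀ m, Tendsto (col m) atTop (𝓝 (q m)) ∧
          Function.Injective (fun k => f (col m k)) ∧ ∀ k, f (col m k) ∈ W) :=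
      fun i => hφmem i
    choose q col hq hqx hcol using hch
    refine machine hX hf x V₁ hV₁o hfxV₁
      (fun i => q (Nat.unpair i).1 (Nat.unpair i).2)
      (fun i => col (Nat.unpair i).1 (Nat.unpair i).2) (fun _ => True)
      (fun _ => y)
      (fun i => hqx _ _) (fun i => (hcol _ _).1)
      (fun i k => hValNotV₁ _ ((hcol (Nat.unpair i).1 (Nat.unpair i).2).2.2 k))
      (fun i _ => (hcol _ _).2.1)
      (fun i hi => absurd trivial hi) (fun i j hi _ _ => absurd trivial hi) ?_
    intro U hU
    obtain ⟨U', hU'sub, hU'o, hxU'⟩ := mem_nhds_iff.1 hU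
    have hev : ∀ᶠ n in atTop, spine (φ n) ∈ U' :=
      (hspten.comp hφ.tendsto_atTop).eventually_mem (hU'o.mem_nhds hxU')
    obtain ⟨n, hn⟩ := hev.exists
    have hev2 : ∀ᶠ m in atTop, q n m ∈ U' :=
      (hq n).eventually_mem (hU'o.mem_nhds hn)
    obtain ⟨m, hm⟩ := hev2.exists
    refine ⟨Nat.pair n m, ?_⟩
    have hev3 : ∀ᶠ k in atTop, col n m k ∈ U' :=
      ((hcol n m).1).eventually_mem (hU'o.mem_nhds hm)
    simp only [Nat.unpair_pair]
    exact hev3.mono (fun k hk => hU'sub hk)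
  · -- CASE C
    obtain ⟨φ, hφ, hφmem⟩ := infinite_enum hSCi
    have hch : ∀ i, ∃ q : ℕ → X, Tendsto q atTop (𝓝 (spine (φ i))) ∧
        (∀ m, q m ≠ x) ∧ (∀ m (F : Finset Y), ∃ c, c ∈ W ∧ c ∉ F ∧
          ∃ u : ℕ → X, Tendsto u atTop (𝓝 (q m)) ∧ ∀ k, f (u k) = c) :=
      fun i => hφmem i
    choose q hq hqx hsupply using hch
    -- global greedy choice of pairwise distinct constants in W
    have hgsup : ∀ t (F : Finset Y), ∃ c, (c ∈ W ∧
        ∃ u : ℕ → X, Tendsto u atTop (𝓝 (q (Nat.unpair t).1 (Nat.unpair t).2)) ∧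
          ∀ k, f (u k) = c) ∧ c ∉ F := by
      intro t F
      obtain ⟨c, hc1, hc2, hc3⟩ := hsupply (Nat.unpair t).1 (Nat.unpair t).2 F
      exact ⟨c, ⟨hc1, hc3⟩, hc2⟩
    obtain ⟨σ, hσinj, hσ⟩ := exists_greedy_injective _ hgsup
    have hrow : ∀ t, ∃ u : ℕ → X,
        Tendsto u atTop (𝓝 (q (Nat.unpair t).1 (Nat.unpair t).2)) ∧
        ∀ k, f (u k) = σ t := fun t => (hσ t).2
    choose row h1 h2 using hrow
    refine machine hX hf x V₁ hV₁o hfxV₁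
      (fun t => q (Nat.unpair t).1 (Nat.unpair t).2) row (fun _ => False) σ
      (fun t => hqx _ _) h1
      (fun t k => by rw [h2 t k]; exact hValNotV₁ _ (hσ t).1)
      (fun t ht => absurd ht (by simp)) (fun t _ k => h2 t k)
      (fun i j _ _ hij => hσinj hij) ?_
    intro U hU
    obtain ⟨U', hU'sub, hU'o, hxU'⟩ := mem_nhds_iff.1 hU
    have hev : ∀ᶠ n in atTop, spine (φ n) ∈ U' :=
      (hspten.comp hφ.tendsto_atTop).eventually_mem (hU'o.mem_nhds hxU')
    obtain ⟨n, hn⟩ := hev.exists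
    have hev2 : ∀ᶠ m in atTop, q n m ∈ U' :=
      (hq n).eventually_mem (hU'o.mem_nhds hn)
    obtain ⟨m, hm⟩ := hev2.exists
    refine ⟨Nat.pair n m, ?_⟩
    have hev3 : ∀ᶠ k in atTop, row (Nat.pair n m) k ∈ U' := by
      apply (h1 (Nat.pair n m)).eventually_mem
      simp only [Nat.unpair_pair]
      exact hU'o.mem_nhds hm
    exact hev3.mono (fun k hk => hU'sub hk)
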